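/- Define φ : ℝ³ → ℝ by φ(x) = exp(1/(|x|² − 1)) for |x| < 1 and φ(x) = 0 for |x| ≥ 1, and for a > 0 set φ_a(x) = a^{−3}·φ(x/a). Then φ_a is continuously differentiable on ℝ³, and for every λ ∈ (0,1) there exists a constant C_λ > 0, independent of a, such that for all a > 0 and all x, v ∈ ℝ³: |v · ∇φ_a(x)| ≤ C_λ · a^{−1−3λ} · |v| · (φ_a(x))^{1−λ}. -/

import Mathlib

open Set

noncomputable section

local notation "E3" => EuclideanSpace ℝ (Fin 3)

/-- The standard bump-type cut-off function on `ℝ³`. -/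
def cutoff (x : EuclideanSpace ℝ (Fin 3)) : ℝ :=
  if ‖x‖ < 1 then Real.exp (1 / (‖x‖ ^ 2 - 1)) else 0

/-- The rescaled cut-off `φ_a(x) = a⁻³ φ(x/a)`. -/
def cutoffScaled (a : ℝ) (x : EuclideanSpace ℝ (Fin 3)) : ℝ :=
  (a ^ 3)⁻¹ * cutoff (a⁻¹ • x)

lemma glue_hasDerivAt (x : ℝ) :
    HasDerivAt expNegInvGlue ((x⁻¹) ^ 2 * expNegInvGlue x) x := by
  simpa using expNegInvGlue.hasDerivAt_polynomial_eval_inv_mul 1 x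

lemma cutoff_eq (x : E3) : cutoff x = expNegInvGlue (1 - ‖x‖ ^ 2) := by
  unfold cutoff
  rcases lt_or_ge ‖x‖ 1 with h | h
  · have hu : 0 < 1 - ‖x‖ ^ 2 := by nlinarith [norm_nonneg x]
    rw [if_pos h, expNegInvGlue, if_neg hu.not_ge, one_div,
      show ‖x‖ ^ 2 - 1 = -(1 - ‖x‖ ^ 2) by ring, inv_neg]
  · rw [if_neg h.not_gt, expNegInvGlue.zero_of_nonpos (by nlinarith)]

lemma core (lam : ℝ) (h0 : 0 < lam) (h1 : lam < 1) (t : ℝ) (ht : 0 ≤ t) :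
    ((1 - t ^ 2)⁻¹) ^ 2 * expNegInvGlue (1 - t ^ 2) * (2 * t)
      ≤ (54 / lam ^ 3) * (expNegInvGlue (1 - t ^ 2)) ^ (1 - lam) := by
  rcases le_or_gt 1 t with h | h
  · rw [expNegInvGlue.zero_of_nonpos (by nlinarith), mul_zero, zero_mul,
      Real.zero_rpow (sub_ne_zero.2 h1.ne'), mul_zero]
  · set u : ℝ := 1 - t ^ 2 with hudef
    have hu : 0 < u := by nlinarith
    have hu1 : u ≤ 1 := by nlinarith
    have hg : expNegInvGlue u = Real.exp (-u⁻¹) := by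
      rw [expNegInvGlue, if_neg hu.not_ge]
    have key : Real.exp (-(lam * u⁻¹)) ≤ 27 * u ^ 3 / lam ^ 3 := by
      have hs : 0 < lam * u⁻¹ := by positivity
      have e1 : (lam * u⁻¹ / 3) ^ 3 ≤ Real.exp (lam * u⁻¹) := by
        calc (lam * u⁻¹ / 3) ^ 3 ≤ (lam * u⁻¹ / 3 + 1) ^ 3 := by
              apply pow_le_pow_left₀ (by positivity) (by linarith)
          _ ≤ Real.exp (lam * u⁻¹ / 3) ^ 3 := by
              apply pow_le_pow_left₀ (by positivity) (Real.add_one_le_exp _)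
          _ = Real.exp (lam * u⁻¹) := by
              rw [← Real.exp_nat_mul]; ring_nf
      rw [Real.exp_neg]
      rw [div_pow] at e1
      have h27 : (lam * u⁻¹) ^ 3 / 27 ≤ Real.exp (lam * u⁻¹) := by
        convert e1 using 2; norm_num
      have hpos : 0 < (lam * u⁻¹) ^ 3 / 27 := by positivity
      have := inv_anti₀ hpos h27
      calc (Real.exp (lam * u⁻¹))⁻¹ ≤ ((lam * u⁻¹) ^ 3 / 27)⁻¹ := this
        _ = 27 * u ^ 3 / lam ^ 3 := by
            field_simp
    have hsplit : Real.exp (-u⁻¹) = Real.exp (-(lam * u⁻¹)) * Real.exp (-u⁻¹ * (1 - lam)) := by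
      rw [← Real.exp_add]; ring_nf
    have hrpow : (expNegInvGlue u) ^ (1 - lam) = Real.exp (-u⁻¹ * (1 - lam)) := by
      rw [hg, ← Real.exp_mul]
    rw [hrpow, hg, hsplit]
    have hE : 0 < Real.exp (-u⁻¹ * (1 - lam)) := Real.exp_pos _
    calc (u⁻¹) ^ 2 * (Real.exp (-(lam * u⁻¹)) * Real.exp (-u⁻¹ * (1 - lam))) * (2 * t)
        = ((u⁻¹) ^ 2 * Real.exp (-(lam * u⁻¹)) * (2 * t)) * Real.exp (-u⁻¹ * (1 - lam)) := by ring
      _ ≤ ((u⁻¹) ^ 2 * (27 * u ^ 3 / lam ^ 3) * (2 * 1)) * Real.exp (-u⁻¹ * (1 - lam)) := by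
          refine mul_le_mul_of_nonneg_right ?_ hE.le
          refine mul_le_mul ?_ (by linarith) (by linarith) (by positivity)
          exact mul_le_mul_of_nonneg_left key (by positivity)
      _ = (54 * u / lam ^ 3) * Real.exp (-u⁻¹ * (1 - lam)) := by
          field_simp; ring
      _ ≤ (54 / lam ^ 3) * Real.exp (-u⁻¹ * (1 - lam)) := by
          refine mul_le_mul_of_nonneg_right ?_ hE.le
          exact (div_le_div_iff_of_pos_right (by positivity)).2 (by linarith)

lemma cutoffScaled_eq (a : ℝ) :
    cutoffScaled a = fun x : E3 => (a ^ 3)⁻¹ * expNegInvGlue (1 - ‖a⁻¹ • x‖ ^ 2) :=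
  funext fun x => by rw [cutoffScaled, cutoff_eq]

lemma hasFDerivAt_cutoffScaled (a : ℝ) (x : E3) :
    HasFDerivAt (cutoffScaled a)
      ((a ^ 3)⁻¹ • ((((1 - ‖a⁻¹ • x‖ ^ 2)⁻¹) ^ 2 * expNegInvGlue (1 - ‖a⁻¹ • x‖ ^ 2)) •
        (-(2 • innerSL ℝ (a⁻¹ • x)))).comp (a⁻¹ • ContinuousLinearMap.id ℝ E3)) x := by
  have h1 : HasFDerivAt (fun z : E3 => a⁻¹ • z) (a⁻¹ • ContinuousLinearMap.id ℝ E3) x :=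
    (hasFDerivAt_id x).const_smul a⁻¹
  have h2 : HasFDerivAt (fun z : E3 => 1 - ‖z‖ ^ 2) (-(2 • innerSL ℝ (a⁻¹ • x))) (a⁻¹ • x) := by
    have h := (hasFDerivAt_const (1 : ℝ) (a⁻¹ • x)).sub
      (hasStrictFDerivAt_norm_sq (a⁻¹ • x)).hasFDerivAt
    rw [zero_sub] at h
    exact h
  have h3 := ((glue_hasDerivAt (1 - ‖a⁻¹ • x‖ ^ 2)).comp_hasFDerivAt ((a⁻¹ :ℝ) • x)
      h2).comp x h1
  have h4 := h3.const_mul ((a ^ 3)⁻¹ : ℝ)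
  rw [cutoffScaled_eq]
  exact h4

theorem cutoff_gradient_interpolation_bound :
    (∀ a : ℝ, 0 < a → ContDiff ℝ 1 (cutoffScaled a)) ∧
    (∀ lam : ℝ, 0 < lam → lam < 1 →
      ∃ C : ℝ, 0 < C ∧
        ∀ a : ℝ, 0 < a → ∀ x v : E3,
          |fderiv ℝ (cutoffScaled a) x v|
            ≤ C * a ^ (-1 - 3 * lam) * ‖v‖ * cutoffScaled a x ^ (1 - lam)) := by
  constructor
  · intro a ha
    rw [cutoffScaled_eq]
    exact contDiff_const.mul (expNegInvGlue.contDiff.comp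
      (contDiff_const.sub ((contDiff_norm_sq ℝ).comp (contDiff_id.const_smul a⁻¹))))
  · intro lam h0 h1
    refine ⟨54 / lam ^ 3, by positivity, fun a ha x v => ?_⟩
    have hD := (hasFDerivAt_cutoffScaled a x).fderiv
    rw [hD, cutoffScaled_eq]
    set y : E3 := a⁻¹ • x with hy
    set G : ℝ := expNegInvGlue (1 - ‖y‖ ^ 2) with hG
    set c : ℝ := ((1 - ‖y‖ ^ 2)⁻¹) ^ 2 * G with hc
    have hGnn : 0 ≤ G := expNegInvGlue.nonneg _
    have hcnn : 0 ≤ c := by positivity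
    have ha3 : (0:ℝ) < (a ^ 3)⁻¹ := by positivity
    have happ : ((a ^ 3)⁻¹ • (c • (-(2 • innerSL ℝ y))).comp
        (a⁻¹ • ContinuousLinearMap.id ℝ E3)) v
        = (a ^ 3)⁻¹ * (c * -(2 * (a⁻¹ * (inner ℝ y v : ℝ)))) := by
      simp [real_inner_smul_right, mul_comm]
      exact Or.inl (by ring)
    rw [happ]
    have habs : |(a ^ 3)⁻¹ * (c * -(2 * (a⁻¹ * (inner ℝ y v : ℝ))))|
        = (a ^ 3)⁻¹ * a⁻¹ * (c * (2 * |(inner ℝ y v : ℝ)|)) := by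
      rw [abs_mul, abs_of_pos ha3, abs_mul, abs_of_nonneg hcnn, abs_neg, abs_mul,
        abs_mul, abs_of_pos (inv_pos.2 ha)]
      norm_num; ring
    rw [habs]
    have hinner : |(inner ℝ y v : ℝ)| ≤ ‖y‖ * ‖v‖ := abs_real_inner_le_norm y v
    have key := core lam h0 h1 ‖y‖ (norm_nonneg y)
    have hsplit : ((a ^ 3)⁻¹ * G) ^ (1 - lam)
        = ((a ^ 3 : ℝ)⁻¹) ^ (1 - lam) * G ^ (1 - lam) := Real.mul_rpow ha3.le hGnn
    have h3r : ((a ^ 3 : ℝ))⁻¹ = a ^ (-3 : ℝ) := by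
      rw [Real.rpow_neg ha.le, ← Real.rpow_natCast a 3]; norm_num
    have hA : a ^ (-1 - 3 * lam) * ((a ^ 3 : ℝ)⁻¹) ^ (1 - lam) = (a ^ 3)⁻¹ * a⁻¹ := by
      rw [h3r, ← Real.rpow_mul ha.le, ← Real.rpow_add ha,
        show (a : ℝ)⁻¹ = a ^ (-1 : ℝ) by rw [Real.rpow_neg ha.le, Real.rpow_one],
        ← Real.rpow_add ha]
      congr 1; ring
    calc (a ^ 3)⁻¹ * a⁻¹ * (c * (2 * |(inner ℝ y v : ℝ)|))
        ≤ (a ^ 3)⁻¹ * a⁻¹ * (c * (2 * (‖y‖ * ‖v‖))) := by gcongr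
      _ = ((a ^ 3)⁻¹ * a⁻¹) * ((c * (2 * ‖y‖)) * ‖v‖) := by ring
      _ ≤ ((a ^ 3)⁻¹ * a⁻¹) * (((54 / lam ^ 3) * G ^ (1 - lam)) * ‖v‖) := by
          exact mul_le_mul_of_nonneg_left
            (mul_le_mul_of_nonneg_right key (norm_nonneg v)) (by positivity)
      _ = 54 / lam ^ 3 * a ^ (-1 - 3 * lam) * ‖v‖ * ((a ^ 3)⁻¹ * G) ^ (1 - lam) := by
          rw [hsplit]
          linear_combination (-(54 / lam ^ 3 * ‖v‖ * G ^ (1 - lam))) * hA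

end
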